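/- Let H be a Hermitian operator on a finite-dimensional Hilbert space satisfying the second no-resonance condition, with eigenbasis {|E⟩}. Then for any operator A on the twofold tensor product of the Hilbert space, the infinite-time average of (e^{-iHt} ⊗ e^{-iHt}) A (e^{iHt} ⊗ e^{iHt}) equals Σ_{E,E'} [ |E,E'⟩⟨E,E'| A |E,E'⟩⟨E,E'| + |E,E'⟩⟨E,E'| A |E',E⟩⟨E',E| ] − Σ_E |E,E⟩⟨E,E| A |E,E⟩⟨E,E| (the second Hamiltonian twirling identity). -/

import Mathlib

open Filter
open scoped BigOperators

/-- The `k`-th no-resonance condition for eigenvalues `E : Fin D → ℝ`. -/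
def NoResonance {D : ℕ} (E : Fin D → ℝ) (k : ℕ) : Prop :=
  ∀ α β : Fin k → Fin D,
    (∑ i, E (α i)) = (∑ i, E (β i)) →
    Multiset.map α Finset.univ.val = Multiset.map β Finset.univ.val

/-- `HasTimeAvgC f L` : the infinite-time average `lim_{T→∞} (1/T)∫_0^T f(t) dt` equals `L`. -/
def HasTimeAvgC (f : ℝ → ℂ) (L : ℂ) : Prop :=
  Tendsto (fun T : ℝ => (1 / (T : ℂ)) * ∫ t in (0:ℝ)..T, f t) atTop (nhds L)

/-- The infinite-time average of a constant is that constant. -/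
lemma avg_const' (C : ℂ) :
    Tendsto (fun T : ℝ => (1 / (T : ℂ)) * ∫ _ in (0:ℝ)..T, C) atTop (nhds C) := by
  have : ∀ᶠ T : ℝ in atTop, (1 / (T : ℂ)) * ∫ _ in (0:ℝ)..T, C = C := by
    filter_upwards [eventually_gt_atTop (0:ℝ)] with T hT
    rw [intervalIntegral.integral_const]
    simp only [sub_zero, Complex.real_smul]
    rw [one_div, inv_mul_cancel_left₀ (by exact_mod_cast hT.ne' : (T:ℂ) ≠ 0)]
  exact Tendsto.congr' (this.mono fun T h => h.symm) tendsto_const_nhds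

/-- The infinite-time average of an oscillating exponential (nonzero frequency) is zero. -/
lemma avg_osc' (θ : ℝ) (hθ : θ ≠ 0) (C : ℂ) :
    Tendsto (fun T : ℝ => (1 / (T : ℂ)) * ∫ t in (0:ℝ)..T, Complex.exp (-Complex.I * θ * t) * C)
      atTop (nhds 0) := by
  have hc : (-Complex.I * θ) ≠ 0 := by
    simp [Complex.ext_iff, hθ, Complex.I_ne_zero]
  have hint : ∀ T : ℝ, (∫ t in (0:ℝ)..T, Complex.exp (-Complex.I * θ * t) * C)
      = ((Complex.exp (-Complex.I * θ * T) - 1) / (-Complex.I * θ)) * C := by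
    intro T
    rw [intervalIntegral.integral_mul_const, integral_exp_mul_complex hc]
    simp
  apply squeeze_zero_norm'
    (a := fun T : ℝ => (1 / T) * (2 / ‖(-Complex.I * θ)‖ * ‖C‖))
  · filter_upwards [eventually_gt_atTop (0:ℝ)] with T hT
    rw [hint T]
    have hTc : ‖(T:ℂ)‖ = T := by simp [abs_of_pos hT]
    have hle : ‖Complex.exp (-Complex.I * θ * T) - 1‖ ≤ 2 := by
      calc ‖Complex.exp (-Complex.I * θ * T) - 1‖ ≤ ‖Complex.exp (-Complex.I * θ * T)‖ + 1 := by
            simpa using norm_sub_le (Complex.exp (-Complex.I * θ * T)) 1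
        _ ≤ 2 := by
            have h1 : ‖Complex.exp (-Complex.I * θ * T)‖ = 1 := by
              rw [Complex.norm_exp]
              simp [Complex.mul_re, Complex.mul_im]
            rw [h1]
            norm_num
    calc ‖(1/(T:ℂ)) * ((Complex.exp (-Complex.I * θ * T) - 1)/(-Complex.I * θ) * C)‖
        = (1/T) * (‖Complex.exp (-Complex.I * θ * T) - 1‖ / ‖(-Complex.I*θ)‖
            * ‖C‖) := by
          simp only [norm_mul, norm_div, norm_one, hTc, map_mul]
      _ ≤ (1/T) * (2 / ‖(-Complex.I*θ)‖ * ‖C‖) := by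
          have hk : 0 < ‖(-Complex.I*θ)‖ := by
            exact norm_pos_iff.mpr hc
          apply mul_le_mul_of_nonneg_left _ (by positivity)
          apply mul_le_mul_of_nonneg_right _ (norm_nonneg C)
          exact (div_le_div_iff_of_pos_right hk).mpr hle
  · simpa [one_div] using tendsto_inv_atTop_zero.mul_const
      (2 / ‖(-Complex.I * (θ:ℂ))‖ * ‖C‖)

/-- Equality of the multisets `{a,b}` and `{c,d}` gives a permutation. -/
lemma pair_perm' {D : ℕ} {a b c d : Fin D}
    (h : Multiset.map ![a,b] Finset.univ.val = Multiset.map ![c,d] Finset.univ.val) :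
    (a = c ∧ b = d) ∨ (a = d ∧ b = c) := by
  have huniv : (Finset.univ.val : Multiset (Fin 2)) = {0, 1} := by decide
  rw [huniv] at h
  have h' : (a ::ₘ {b}) = (c ::ₘ {d}) := by
    simpa [Multiset.insert_eq_cons] using h
  rcases (Multiset.cons_eq_cons.mp h') with ⟨h1, h2⟩ | ⟨h1, cs, h2, h3⟩
  · exact Or.inl ⟨h1, by simpa using h2⟩
  · rw [Multiset.singleton_eq_cons_iff] at h2 h3
    exact Or.inr ⟨h3.1.symm, h2.1⟩

/-- **Second Hamiltonian twirling identity**, stated entrywise in the eigenbasis of `H`.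
For an operator `A` on `H ⊗ H` with matrix elements `A (a,b) (c,d) = ⟨E_a,E_b|A|E_c,E_d⟩`,
the matrix element of `(e^{-iHt} ⊗ e^{-iHt}) A (e^{iHt} ⊗ e^{iHt})` is
`e^{-i((E_a+E_b)-(E_c+E_d))t} · A (a,b) (c,d)`, and if the second no-resonance condition holds,
its infinite-time average equals the corresponding matrix element of
`∑_{E,E'} [ |E,E'⟩⟨E,E'| A |E,E'⟩⟨E,E'| + |E,E'⟩⟨E,E'| A |E',E⟩⟨E',E| ]
 − ∑_E |E,E⟩⟨E,E| A |E,E⟩⟨E,E|`. -/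
theorem second_hamiltonian_twirling {D : ℕ} (E : Fin D → ℝ) (hE : NoResonance E 2)
    (A : Matrix (Fin D × Fin D) (Fin D × Fin D) ℂ) (a b c d : Fin D) :
    HasTimeAvgC
      (fun t => Complex.exp (-Complex.I * (((E a : ℂ) + E b) - ((E c : ℂ) + E d)) * t) *
        A (a, b) (c, d))
      ((if a = c ∧ b = d then A (a, b) (c, d) else 0)
        + (if a = d ∧ b = c then A (a, b) (c, d) else 0)
        - (if a = b ∧ b = c ∧ c = d then A (a, b) (c, d) else 0)) := by
  set C := A (a, b) (c, d)
  have hcast : (((E a : ℂ) + E b) - ((E c : ℂ) + E d))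
      = ((E a + E b - (E c + E d) : ℝ) : ℂ) := by push_cast; ring
  unfold HasTimeAvgC
  by_cases h : E a + E b = E c + E d
  · -- resonant case
    have hperm : (a = c ∧ b = d) ∨ (a = d ∧ b = c) := by
      apply pair_perm'
      apply hE
      simpa [Fin.sum_univ_two] using h
    have hθ0 : E a + E b - (E c + E d) = 0 := by linarith
    have hfun : (fun t : ℝ =>
          Complex.exp (-Complex.I * (((E a : ℂ) + E b) - ((E c : ℂ) + E d)) * t) * C)
        = fun _ : ℝ => C := by
      funext t
      rw [hcast, hθ0]
      simp
    rw [hfun]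
    have hval : ((if a = c ∧ b = d then C else 0)
        + (if a = d ∧ b = c then C else 0)
        - (if a = b ∧ b = c ∧ c = d then C else 0)) = C := by
      by_cases hP : a = c ∧ b = d <;> by_cases hQ : a = d ∧ b = c
      · have hR : a = b ∧ b = c ∧ c = d := by
          obtain ⟨h1, h2⟩ := hP; obtain ⟨h3, h4⟩ := hQ
          refine ⟨?_, ?_, ?_⟩ <;> omega
        rw [if_pos hP, if_pos hQ, if_pos hR]; ring
      · have hR : ¬(a = b ∧ b = c ∧ c = d) := by
          intro ⟨h1, h2, h3⟩; exact hQ ⟨by omega, by omega⟩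
        rw [if_pos hP, if_neg hQ, if_neg hR]; ring
      · have hR : ¬(a = b ∧ b = c ∧ c = d) := by
          intro ⟨h1, h2, h3⟩; exact hP ⟨by omega, by omega⟩
        rw [if_neg hP, if_pos hQ, if_neg hR]; ring
      · rcases hperm with hp | hp
        · exact absurd hp hP
        · exact absurd hp hQ
    rw [hval]
    exact avg_const' C
  · -- non-resonant case
    have hθ : E a + E b - (E c + E d) ≠ 0 := fun hz => h (by linarith)
    have hP : ¬(a = c ∧ b = d) := by rintro ⟨rfl, rfl⟩; exact h rfl
    have hQ : ¬(a = d ∧ b = c) := by rintro ⟨rfl, rfl⟩; exact h (by ring)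
    have hR : ¬(a = b ∧ b = c ∧ c = d) := by rintro ⟨rfl, rfl, rfl⟩; exact h rfl
    rw [if_neg hP, if_neg hQ, if_neg hR]
    have h0 : ((0 : ℂ) + 0 - 0) = 0 := by ring
    rw [h0]
    have hfun : (fun t : ℝ =>
          Complex.exp (-Complex.I * (((E a : ℂ) + E b) - ((E c : ℂ) + E d)) * t) * C)
        = fun t : ℝ => Complex.exp (-Complex.I * ((E a + E b - (E c + E d) : ℝ) : ℂ) * t) * C := by
      funext t; rw [hcast]
    rw [hfun]
    exact avg_osc' _ hθ C
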